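/- For the second moment, G_n^α(e_2; z) = z^2 + (2z(1-z)/(n+1))(1 + (1-α)/n) for all z ∈ ℂ, n ≥ 2, α ∈ [0,1], where e_2(t) = t^2. -/

import Mathlib

open scoped BigOperators Nat

noncomputable def qb (α : ℝ) (n k : ℕ) (z : ℂ) : ℂ :=
  if n = 1 then (if k = 0 then 1 - z else if k = 1 then z else 0)
  else ((n-2).choose k : ℂ) * (1 - (α:ℂ)) * z^k * (1-z)^(n-k-1)
    + (if 2 ≤ k then ((n-2).choose (k-2) : ℂ) * (1 - (α:ℂ)) * z^(k-1) * (1-z)^(n-k) else 0)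
    + (n.choose k : ℂ) * (α:ℂ) * z^k * (1-z)^(n-k)

noncomputable def Gop (α : ℝ) (n : ℕ) (f : ℂ → ℂ) (z : ℂ) : ℂ :=
  qb α n 0 z * f 0 + qb α n n z * f 1 +
    ((n:ℂ) - 1) * ∑ k ∈ Finset.Icc 1 (n-1), qb α n k z *
      ∫ t in (0:ℝ)..1, (((n-2).choose (k-1) : ℂ) * (t:ℂ)^(k-1) * (1-(t:ℂ))^(n-k-1) * f (t:ℂ))

lemma prodfac (a b : ℕ) :
    (a ! : ℂ) * ∏ j ∈ Finset.range (b+1), ((a:ℂ)+1+j) = ((a+b+1)! : ℂ) := by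
  induction b with
  | zero =>
    rw [Finset.prod_range_succ, Finset.prod_range_zero, one_mul]
    push_cast [Nat.factorial_succ]
    ring
  | succ b ih =>
    rw [Finset.prod_range_succ, ← mul_assoc, ih]
    have : a + (b+1) + 1 = (a + b + 1) + 1 := by ring
    rw [this]
    push_cast [Nat.factorial_succ]
    ring

lemma intval (a b : ℕ) :
    (∫ t in (0:ℝ)..1, (t:ℂ)^a * (1-(t:ℂ))^b) = (a ! : ℂ) * (b ! : ℂ) / ((a+b+1)! : ℂ) := by
  have hu : 0 < Complex.re ((a:ℂ)+1) := by
    simp only [Complex.add_re, Complex.natCast_re, Complex.one_re]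
    positivity
  have h := Complex.betaIntegral_eval_nat_add_one_right hu b
  rw [Complex.betaIntegral] at h
  simp only [add_sub_cancel_right, Complex.cpow_natCast] at h
  rw [h]
  have h0 : ((a)! : ℂ) ≠ 0 := Nat.cast_ne_zero.mpr (Nat.factorial_ne_zero a)
  rw [← prodfac a b, mul_div_mul_left _ _ h0]

lemma bern0 (m : ℕ) (z : ℂ) :
    ∑ i ∈ Finset.range (m+1), (m.choose i : ℂ) * z^i * (1-z)^(m-i) = 1 := by
  have h := congrArg (Polynomial.eval z) (bernsteinPolynomial.sum ℂ m)
  simpa [bernsteinPolynomial, Polynomial.eval_finset_sum] using h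

lemma bern1 (m : ℕ) (z : ℂ) :
    ∑ i ∈ Finset.range (m+1), (i:ℂ) * ((m.choose i : ℂ) * z^i * (1-z)^(m-i)) = (m:ℂ) * z := by
  have h := congrArg (Polynomial.eval z) (bernsteinPolynomial.sum_smul ℂ m)
  simpa [bernsteinPolynomial, Polynomial.eval_finset_sum, nsmul_eq_mul, mul_assoc] using h

lemma bern2 (m : ℕ) (z : ℂ) :
    ∑ i ∈ Finset.range (m+1), (i:ℂ) * ((i:ℂ)-1) * ((m.choose i : ℂ) * z^i * (1-z)^(m-i))
      = (m:ℂ) * ((m:ℂ)-1) * z^2 := by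
  have h := congrArg (Polynomial.eval z) (bernsteinPolynomial.sum_mul_smul ℂ m)
  have cast : ∀ i : ℕ, ((i*(i-1) : ℕ) : ℂ) = (i:ℂ) * ((i:ℂ)-1) := by
    intro i
    cases i with
    | zero => simp
    | succ i => push_cast [Nat.succ_sub_one]; ring
  simp only [bernsteinPolynomial, Polynomial.eval_finset_sum, nsmul_eq_mul, Polynomial.eval_mul,
    Polynomial.eval_pow, Polynomial.eval_natCast, Polynomial.eval_sub, Polynomial.eval_one,
    Polynomial.eval_X, Nat.cast_mul] at h
  calc ∑ i ∈ Finset.range (m+1), (i:ℂ) * ((i:ℂ)-1) * ((m.choose i : ℂ) * z^i * (1-z)^(m-i))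
      = ∑ i ∈ Finset.range (m+1), ((i*(i-1):ℕ):ℂ) * ((m.choose i : ℂ) * z^i * (1-z)^(m-i)) := by
        refine Finset.sum_congr rfl fun i _ => ?_; rw [cast]
    _ = (m:ℂ) * ((m:ℂ)-1) * z^2 := by
        rw [← cast m]
        push_cast at h ⊢
        convert h using 2
  
lemma wsum (m : ℕ) (z a b c : ℂ) :
    ∑ i ∈ Finset.range (m+1),
        ((m.choose i : ℂ) * z^i * (1-z)^(m-i)) * (a*(i:ℂ)*((i:ℂ)-1) + b*(i:ℂ) + c)
      = a*(m:ℂ)*((m:ℂ)-1)*z^2 + b*(m:ℂ)*z + c := by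
  have e : ∀ i ∈ Finset.range (m+1),
      ((m.choose i : ℂ) * z^i * (1-z)^(m-i)) * (a*(i:ℂ)*((i:ℂ)-1) + b*(i:ℂ) + c)
      = a * ((i:ℂ) * ((i:ℂ)-1) * ((m.choose i : ℂ) * z^i * (1-z)^(m-i)))
        + b * ((i:ℂ) * ((m.choose i : ℂ) * z^i * (1-z)^(m-i)))
        + c * ((m.choose i : ℂ) * z^i * (1-z)^(m-i)) := fun i _ => by ring
  rw [Finset.sum_congr rfl e, Finset.sum_add_distrib, Finset.sum_add_distrib,
    ← Finset.mul_sum, ← Finset.mul_sum, ← Finset.mul_sum, bern0, bern1, bern2]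
  ring

lemma S1lem (m : ℕ) (z : ℂ) :
    ∑ j ∈ Finset.range (m+1),
        (m.choose (j+1) : ℂ) * z^(j+1) * (1-z)^(m-j) * (((j:ℂ)+1)*((j:ℂ)+2))
      = (1-z)*(m:ℂ)*((m:ℂ)-1)*z^2 + 2*(1-z)*(m:ℂ)*z := by
  set g : ℕ → ℂ := fun i => (m.choose i : ℂ) * z^i * (1-z)^(m+1-i) * ((i:ℂ)*((i:ℂ)+1)) with hg
  have e : ∀ j ∈ Finset.range (m+1),
      (m.choose (j+1) : ℂ) * z^(j+1) * (1-z)^(m-j) * (((j:ℂ)+1)*((j:ℂ)+2)) = g (j+1) := by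
    intro j _
    simp only [hg, Nat.succ_sub_succ]
    push_cast
    ring
  rw [Finset.sum_congr rfl e]
  have h1 := Finset.sum_range_succ' g (m+1)
  have h2 := Finset.sum_range_succ g (m+1)
  have hg0 : g 0 = 0 := by simp [hg]
  have hgm : g (m+1) = 0 := by simp [hg, Nat.choose_succ_self]
  have h3 : ∑ j ∈ Finset.range (m+1), g j
      = ∑ i ∈ Finset.range (m+1),
          ((m.choose i : ℂ) * z^i * (1-z)^(m-i)) * ((1-z)*(i:ℂ)*((i:ℂ)-1) + (2*(1-z))*(i:ℂ) + 0) := by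
    refine Finset.sum_congr rfl fun i hi => ?_
    have hi' : m + 1 - i = (m - i) + 1 := by
      have := Finset.mem_range.mp hi; omega
    simp only [hg, hi', pow_succ]
    ring
  have key : ∑ j ∈ Finset.range (m+1), g (j+1)
      = ∑ j ∈ Finset.range (m+1), g j + g (m+1) - g 0 := by
    rw [← h2, h1]; ring
  rw [key, h3, wsum, hgm, hg0]
  ring

lemma S2lem (m : ℕ) (z : ℂ) :
    ∑ j ∈ Finset.range (m+1),
        (if 1 ≤ j then (m.choose (j-1) : ℂ) * z^j * (1-z)^(m+1-j) else 0) * (((j:ℂ)+1)*((j:ℂ)+2))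
      = (m:ℂ)*((m:ℂ)-1)*z^3 + 6*(m:ℂ)*z^2 + 6*z - ((m:ℂ)+2)*((m:ℂ)+3)*z^(m+1) := by
  set F : ℕ → ℂ := fun j =>
    (if 1 ≤ j then (m.choose (j-1) : ℂ) * z^j * (1-z)^(m+1-j) else 0) * (((j:ℂ)+1)*((j:ℂ)+2))
    with hF
  have h1 := Finset.sum_range_succ' F m
  have hF0 : F 0 = 0 := by simp [hF]
  set h : ℕ → ℂ := fun i => (m.choose i : ℂ) * z^(i+1) * (1-z)^(m-i) * (((i:ℂ)+2)*((i:ℂ)+3))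
    with hh
  have e : ∀ i ∈ Finset.range m, F (i+1) = h i := by
    intro i _
    have e1 : m + 1 - (i+1) = m - i := by omega
    have e2 : i + 1 - 1 = i := by omega
    simp only [hF, hh, e1, e2, if_pos (Nat.le_add_left 1 i)]
    push_cast
    ring
  have h2 := Finset.sum_range_succ h m
  have hhm : h m = (m.choose m : ℂ) * z^(m+1) * (1-z)^(m-m) * (((m:ℂ)+2)*((m:ℂ)+3)) := rfl
  have h3 : ∑ i ∈ Finset.range (m+1), h i
      = ∑ i ∈ Finset.range (m+1),
          ((m.choose i : ℂ) * z^i * (1-z)^(m-i)) * (z*(i:ℂ)*((i:ℂ)-1) + (6*z)*(i:ℂ) + 6*z) := by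
    refine Finset.sum_congr rfl fun i _ => ?_
    simp only [hh, pow_succ]
    ring
  have key : ∑ i ∈ Finset.range m, h i = ∑ i ∈ Finset.range (m+1), h i - h m := by
    rw [h2]; ring
  show ∑ j ∈ Finset.range (m+1), F j = _
  rw [h1, hF0, add_zero, Finset.sum_congr rfl e, key, h3, wsum, hhm,
    Nat.sub_self, Nat.choose_self]
  push_cast
  ring

lemma S3lem (m : ℕ) (z : ℂ) :
    ∑ j ∈ Finset.range (m+1),
        ((m+2).choose (j+1) : ℂ) * z^(j+1) * (1-z)^(m+1-j) * (((j:ℂ)+1)*((j:ℂ)+2))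
      = ((m:ℂ)+2)*((m:ℂ)+1)*z^2 + 2*((m:ℂ)+2)*z - ((m:ℂ)+2)*((m:ℂ)+3)*z^(m+2) := by
  set g : ℕ → ℂ := fun i => ((m+2).choose i : ℂ) * z^i * (1-z)^(m+2-i) * ((i:ℂ)*((i:ℂ)+1))
    with hg
  have e : ∀ j ∈ Finset.range (m+1),
      ((m+2).choose (j+1) : ℂ) * z^(j+1) * (1-z)^(m+1-j) * (((j:ℂ)+1)*((j:ℂ)+2)) = g (j+1) := by
    intro j _
    have e1 : m + 2 - (j+1) = m + 1 - j := by omega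
    simp only [hg, e1]
    push_cast
    ring
  have h1 := Finset.sum_range_succ' g (m+1)
  have h2 := Finset.sum_range_succ g (m+2)
  have hg0 : g 0 = 0 := by simp [hg]
  have hgm : g (m+2) = ((m+2).choose (m+2) : ℂ) * z^(m+2) * (1-z)^(m+2-(m+2)) * (((m:ℂ)+2)*(((m:ℂ)+2)+1)) := by
    simp only [hg]; push_cast; ring
  have h3 : ∑ i ∈ Finset.range (m+2+1), g i
      = ∑ i ∈ Finset.range (m+2+1),
          (((m+2).choose i : ℂ) * z^i * (1-z)^(m+2-i)) * (1*(i:ℂ)*((i:ℂ)-1) + 2*(i:ℂ) + 0) := by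
    refine Finset.sum_congr rfl fun i _ => ?_
    simp only [hg]
    ring
  have key : ∑ j ∈ Finset.range (m+1), g (j+1)
      = ∑ i ∈ Finset.range (m+2+1), g i - g (m+2) - g 0 := by
    have h1' : ∑ i ∈ Finset.range (m+2), g i = ∑ k ∈ Finset.range (m+1), g (k+1) + g 0 := h1
    rw [h2, h1']
    ring
  rw [Finset.sum_congr rfl e, key, h3, wsum, hgm, Nat.sub_self, Nat.choose_self]
  push_cast
  ring

theorem Gop_e2 (n : ℕ) (hn : 2 ≤ n) (α : ℝ) (hα : α ∈ Set.Icc (0:ℝ) 1) (z : ℂ) :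
    Gop α n (fun w => w^2) z
      = z^2 + 2 * z * (1 - z) / ((n:ℂ) + 1) * (1 + (1 - (α:ℂ)) / (n:ℂ)) := by
  obtain ⟨m, rfl⟩ : ∃ m, n = m + 2 := ⟨n-2, by omega⟩
  clear hn
  have hn1 : m + 2 ≠ 1 := by omega
  rw [Gop]
  have h0 : qb α (m+2) 0 z * (fun w : ℂ => w^2) 0 = 0 := by norm_num
  have hqn : qb α (m+2) (m+2) z * (fun w : ℂ => w^2) 1
      = (1-(α:ℂ)) * z^(m+1) + (α:ℂ) * z^(m+2) := by
    show qb α (m+2) (m+2) z * 1^2 = _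
    rw [qb, if_neg hn1, one_pow, mul_one, if_pos (show 2 ≤ m+2 by omega),
      show (m+2)-2 = m from rfl,
      show (m+2)-(m+2) = 0 from Nat.sub_self _,
      show (m+2)-1 = m+1 from rfl,
      Nat.choose_eq_zero_of_lt (show m < m+2 by omega),
      Nat.choose_self, Nat.choose_self]
    push_cast
    ring
  rw [h0, zero_add, hqn]
  -- evaluate the integrals
  have hsum1 : ∀ k ∈ Finset.Icc 1 (m+2-1),
      qb α (m+2) k z * (∫ t in (0:ℝ)..1,
          (((m+2-2).choose (k-1) : ℂ) * (t:ℂ)^(k-1) * (1-(t:ℂ))^(m+2-k-1) * (fun w : ℂ => w^2) (t:ℂ)))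
      = qb α (m+2) k z * ((m ! : ℂ) * ((k:ℂ)*((k:ℂ)+1)) / ((m+3)! : ℂ)) := by
    intro k hk
    obtain ⟨hk1, hk2⟩ := Finset.mem_Icc.mp hk
    congr 1
    obtain ⟨j, rfl⟩ : ∃ j, k = j+1 := ⟨k-1, by omega⟩
    have hj : j ≤ m := by omega
    have e : Set.EqOn
        (fun t : ℝ => (((m+2-2).choose (j+1-1) : ℂ) * (t:ℂ)^(j+1-1) * (1-(t:ℂ))^(m+2-(j+1)-1)
          * (fun w : ℂ => w^2) (t:ℂ)))
        (fun t : ℝ => ((m.choose j : ℂ)) * ((t:ℂ)^(j+2) * (1-(t:ℂ))^(m-j)))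
        (Set.uIcc 0 1) := by
      intro t _
      show (m.choose j : ℂ) * (t:ℂ)^j * (1-(t:ℂ))^(m+2-(j+1)-1) * (t:ℂ)^2 = _
      rw [show m+2-(j+1)-1 = m-j from by omega]
      ring
    rw [intervalIntegral.integral_congr e, intervalIntegral.integral_const_mul, intval,
      show j+2+(m-j)+1 = m+3 from by omega]
    have hc := Nat.choose_mul_factorial_mul_factorial hj
    have hnat : m.choose j * ((j+2)! * (m-j)!) = m ! * ((j+1)*(j+2)) := by
      calc m.choose j * ((j+2)! * (m-j)!)
          = (m.choose j * j ! * (m-j)!) * ((j+1)*(j+2)) := by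
            rw [Nat.factorial_succ, Nat.factorial_succ]; ring
        _ = m ! * ((j+1)*(j+2)) := by rw [hc]
    calc (m.choose j : ℂ) * (((j+2)! : ℂ) * ((m-j)! : ℂ) / ((m+3)! : ℂ))
        = ((m.choose j * ((j+2)! * (m-j)!) : ℕ) : ℂ) / ((m+3)! : ℂ) := by push_cast; ring
      _ = ((m ! * ((j+1)*(j+2)) : ℕ) : ℂ) / ((m+3)! : ℂ) := by rw [hnat]
      _ = (m ! : ℂ) * (((j+1:ℕ):ℂ)*(((j+1:ℕ):ℂ)+1)) / ((m+3)! : ℂ) := by push_cast; ring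
  rw [Finset.sum_congr rfl hsum1]
  -- reindex
  rw [show Finset.Icc 1 (m+2-1) = Finset.Ico 1 (m+2) from (Finset.Ico_add_one_right_eq_Icc 1 (m+1)).symm,
    Finset.sum_Ico_eq_sum_range,
    show m+2-1 = m+1 from rfl]
  -- expand qb
  have hsum2 : ∀ i ∈ Finset.range (m+1),
      qb α (m+2) (1+i) z * ((m ! : ℂ) * (((1+i:ℕ):ℂ)*(((1+i:ℕ):ℂ)+1)) / ((m+3)! : ℂ))
      = ((1-(α:ℂ)) * ((m.choose (i+1) : ℂ) * z^(i+1) * (1-z)^(m-i) * (((i:ℂ)+1)*((i:ℂ)+2)))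
        + (1-(α:ℂ)) * ((if 1 ≤ i then (m.choose (i-1) : ℂ) * z^i * (1-z)^(m+1-i) else 0)
            * (((i:ℂ)+1)*((i:ℂ)+2)))
        + (α:ℂ) * (((m+2).choose (i+1) : ℂ) * z^(i+1) * (1-z)^(m+1-i) * (((i:ℂ)+1)*((i:ℂ)+2))))
        * ((m ! : ℂ) / ((m+3)! : ℂ)) := by
    intro i _
    rw [qb, if_neg hn1]
    rw [show (1:ℕ)+i = i+1 from by omega, show (m+2)-2 = m from rfl,
      show m+2-(i+1)-1 = m-i from by omega, show m+2-(i+1) = m+1-i from by omega,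
      show (i+1)-1 = i from rfl, show (i+1)-2 = i-1 from by omega]
    by_cases h : 1 ≤ i
    · rw [if_pos (show 2 ≤ i+1 by omega), if_pos h]
      push_cast
      ring
    · rw [if_neg (show ¬ 2 ≤ i+1 by omega), if_neg h]
      push_cast
      ring
  rw [Finset.sum_congr rfl hsum2, ← Finset.sum_mul, Finset.sum_add_distrib,
    Finset.sum_add_distrib, ← Finset.mul_sum, ← Finset.mul_sum, ← Finset.mul_sum,
    S1lem, S2lem, S3lem]
  -- final algebra
  have hfac : ((m+3)! : ℂ) = ((m:ℂ)+3)*(((m:ℂ)+2)*(((m:ℂ)+1)*(m ! : ℂ))) := by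
    rw [show m+3 = ((m+1)+1)+1 from rfl, Nat.factorial_succ, Nat.factorial_succ,
      Nat.factorial_succ]
    push_cast
    ring
  have hm1 : ((m:ℂ)+1) ≠ 0 := by
    have : ((m+1:ℕ):ℂ) ≠ 0 := Nat.cast_ne_zero.mpr (by omega)
    push_cast at this; exact this
  have hm2 : ((m:ℂ)+2) ≠ 0 := by
    have : ((m+2:ℕ):ℂ) ≠ 0 := Nat.cast_ne_zero.mpr (by omega)
    push_cast at this; exact this
  have hm3 : ((m:ℂ)+3) ≠ 0 := by
    have : ((m+3:ℕ):ℂ) ≠ 0 := Nat.cast_ne_zero.mpr (by omega)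
    push_cast at this; exact this
  have hmf : (m ! : ℂ) ≠ 0 := Nat.cast_ne_zero.mpr (Nat.factorial_ne_zero _)
  rw [hfac]
  push_cast
  rw [show (m:ℂ)+2+1 = (m:ℂ)+3 from by ring]
  field_simp
  ring
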